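/- Let n ≥ 1, let A be a real symmetric positive semidefinite n×n matrix, let δ, ε > 0, and let B be the matrix with entries B_{ij} = A_{ij}·1_{|A_{ij}| > δ} + ε·1_{i=j}. Then for every vector v ∈ ℝⁿ, vᵀ B v ≥ (ε − nδ)·‖v‖₂². In particular, every eigenvalue of B is at least ε − nδ, and B is positive definite whenever ε > nδ. -/

import Mathlib

open Matrix

theorem shifted_truncation_posdef
    (n : ℕ) (hn : 1 ≤ n)
    (A : Matrix (Fin n) (Fin n) ℝ) (hA : A.PosSemidef)
    (δ ε : ℝ) (hδ : 0 < δ) (hε : 0 < ε)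
    (B : Matrix (Fin n) (Fin n) ℝ)
    (hB : ∀ i j, B i j = (if δ < |A i j| then A i j else 0) + (if i = j then ε else 0)) :
    (∀ v : Fin n → ℝ, (ε - n * δ) * (∑ i, v i ^ 2) ≤ v ⬝ᵥ B.mulVec v) ∧
    (∀ (μ : ℝ) (v : Fin n → ℝ), v ≠ 0 → B.mulVec v = μ • v → ε - n * δ ≤ μ) ∧
    ((n : ℝ) * δ < ε → B.PosDef) := by
  set c : Matrix (Fin n) (Fin n) ℝ := fun i j => if δ < |A i j| then 0 else A i j with hc
  have hcle : ∀ i j, |c i j| ≤ δ := by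
    intro i j
    simp only [hc]
    split
    · simpa using hδ.le
    · next h => exact not_lt.mp h
  have key : ∀ v : Fin n → ℝ, (ε - n * δ) * (∑ i, v i ^ 2) ≤ v ⬝ᵥ B.mulVec v := by
    intro v
    have row : ∀ i, (∑ j, B i j * v j)
        = (∑ j, A i j * v j) - (∑ j, c i j * v j) + ε * v i := by
      intro i
      simp only [hB, hc, add_mul]
      rw [Finset.sum_add_distrib, ← Finset.sum_sub_distrib]
      congr 1
      · apply Finset.sum_congr rfl
        intro j _
        split <;> simp
      · simp [ite_mul, Finset.sum_ite_eq]
    have expand : v ⬝ᵥ B.mulVec v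
        = v ⬝ᵥ A.mulVec v - (∑ i, ∑ j, v i * (c i j * v j)) + ε * ∑ i, v i ^ 2 := by
      calc v ⬝ᵥ B.mulVec v
          = ∑ i, v i * ((∑ j, A i j * v j) - (∑ j, c i j * v j) + ε * v i) := by
            simp only [dotProduct, mulVec]
            exact Finset.sum_congr rfl fun i _ => by rw [row i]
        _ = v ⬝ᵥ A.mulVec v - (∑ i, ∑ j, v i * (c i j * v j)) + ε * ∑ i, v i ^ 2 := by
            simp only [dotProduct, mulVec, mul_add, mul_sub, Finset.mul_sum]
            rw [Finset.sum_add_distrib, Finset.sum_sub_distrib]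
            congr 1
            apply Finset.sum_congr rfl
            intro i _
            ring
    have hcs : (∑ i, |v i|) ^ 2 ≤ (n : ℝ) * ∑ i, v i ^ 2 := by
      have := sq_sum_le_card_mul_sum_sq (s := (Finset.univ : Finset (Fin n))) (f := fun i => |v i|)
      simpa [sq_abs] using this
    have hbound : ∑ i, ∑ j, v i * (c i j * v j) ≤ δ * ((n : ℝ) * ∑ i, v i ^ 2) := by
      calc ∑ i, ∑ j, v i * (c i j * v j)
          ≤ ∑ i, ∑ j, |v i| * (δ * |v j|) := by
            apply Finset.sum_le_sum; intro i _
            apply Finset.sum_le_sum; intro j _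
            calc v i * (c i j * v j) ≤ |v i * (c i j * v j)| := le_abs_self _
              _ = |v i| * (|c i j| * |v j|) := by rw [abs_mul, abs_mul]
              _ ≤ |v i| * (δ * |v j|) := by
                  apply mul_le_mul_of_nonneg_left _ (abs_nonneg _)
                  exact mul_le_mul_of_nonneg_right (hcle i j) (abs_nonneg _)
        _ = δ * (∑ i, |v i|) ^ 2 := by
            simp only [← Finset.mul_sum, ← Finset.sum_mul]
            rw [pow_two]; ring
        _ ≤ δ * ((n : ℝ) * ∑ i, v i ^ 2) := by
            exact mul_le_mul_of_nonneg_left hcs hδ.le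
    have hApos : 0 ≤ v ⬝ᵥ A.mulVec v := by
      have := hA.dotProduct_mulVec_nonneg v
      simpa using this
    rw [expand]
    nlinarith [hbound, hApos]
  refine ⟨key, ?_, ?_⟩
  · intro μ v hv hev
    have hs : 0 < ∑ i, v i ^ 2 := by
      have : ∃ i, v i ≠ 0 := by
        by_contra h
        push_neg at h
        exact hv (funext h)
      obtain ⟨i, hi⟩ := this
      apply Finset.sum_pos' (fun j _ => sq_nonneg _) ⟨i, Finset.mem_univ i, by positivity⟩
    have h1 := key v
    rw [hev] at h1
    have h2 : v ⬝ᵥ (μ • v) = μ * ∑ i, v i ^ 2 := by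
      simp only [dotProduct, Pi.smul_apply, smul_eq_mul, Finset.mul_sum]
      exact Finset.sum_congr rfl fun i _ => by ring
    rw [h2] at h1
    exact le_of_mul_le_mul_right h1 hs
  · intro hle
    rw [Matrix.posDef_iff_dotProduct_mulVec]
    constructor
    · apply Matrix.IsHermitian.ext
      intro i j
      simp only [hB, star_trivial]
      have : A j i = A i j := by
        have h := hA.1.apply i j
        simpa using h
      simp [this, eq_comm]
    · intro v hv
      have hs : 0 < ∑ i, v i ^ 2 := by
        have : ∃ i, v i ≠ 0 := by
          by_contra h
          push_neg at h
          exact hv (funext h)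
        obtain ⟨i, hi⟩ := this
        apply Finset.sum_pos' (fun j _ => sq_nonneg _) ⟨i, Finset.mem_univ i, by positivity⟩
      have := key v
      have hpos : 0 < (ε - n * δ) * ∑ i, v i ^ 2 := by
        apply mul_pos (by linarith) hs
      simp only [star_trivial]
      calc (0:ℝ) < (ε - n * δ) * ∑ i, v i ^ 2 := hpos
        _ ≤ v ⬝ᵥ B.mulVec v := this
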